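/- Let A be a perfect MV-algebra. If x ≤ ¬x and y ≤ ¬y, then sup(x,y) ≤ ¬sup(x,y). That is, the radical {x : x ≤ ¬x} is closed under binary suprema. -/
import Mathlib


/-- An MV-algebra `(A, ⊕, ¬, 0)`. -/
class MV (A : Type*) where
  op : A → A → A
  neg : A → A
  zero : A
  op_assoc : ∀ x y z : A, op (op x y) z = op x (op y z)
  op_comm : ∀ x y : A, op x y = op y x
  op_zero : ∀ x : A, op x zero = x
  neg_neg : ∀ x : A, neg (neg x) = x
  op_neg_zero : ∀ x : A, op x (neg zero) = neg zero
  mv6 : ∀ x y : A, op (neg (op (neg x) y)) y = op (neg (op (neg y) x)) x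

namespace MV

variable {A : Type*} [MV A]

/-- `1 := ¬0`. -/
def one : A := neg zero

/-- `x ⊙ y := ¬(¬x ⊕ ¬y)`. -/
def odot (x y : A) : A := neg (op (neg x) (neg y))

/-- `sup(x,y) := (x ⊙ ¬y) ⊕ y`. -/
def ssup (x y : A) : A := op (odot x (neg y)) y

/-- `inf(x,y) := (x ⊕ ¬y) ⊙ y`. -/
def sinf (x y : A) : A := odot (op x (neg y)) y

/-- `x ≤ y` iff `¬x ⊕ y = 1`. -/
def le (x y : A) : Prop := op (neg x) y = one

/-- `x ≤ y` iff `inf(x,y) = x`. -/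
def leInf (x y : A) : Prop := sinf x y = x

/-- `n`-fold sum `nx = x ⊕ ⋯ ⊕ x`. -/
def nsm : ℕ → A → A
  | 0, _ => zero
  | n + 1, x => op x (nsm n x)

/-- `x² := x ⊙ x`. -/
def sq (x : A) : A := odot x x

end MV

namespace MV

/-- A perfect MV-algebra: nontrivial, satisfying `x² ⊕ x² = (x ⊕ x)²` and,
for every `x`, either `x ≤ ¬x` or `¬x ≤ x`. -/
def Perfect (A : Type*) [MV A] : Prop :=
  (zero : A) ≠ one ∧
  (∀ x : A, op (sq x) (sq x) = sq (op x x)) ∧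
  (∀ x : A, le x (neg x) ∨ le (neg x) x)

end MV

namespace MVAux

open MV

variable {A : Type*} [MV A]

lemma zero_op (x : A) : op zero x = x := by rw [op_comm, op_zero]

lemma op_one (x : A) : op x one = one := op_neg_zero x

lemma one_op (x : A) : op one x = one := by rw [op_comm]; exact op_neg_zero x

lemma neg_one : (neg one : A) = zero := neg_neg zero

lemma neg_op_self (x : A) : op (neg x) x = one := by
  have h := mv6 x (one : A)
  simp only [op_one, neg_one, zero_op] at h
  exact h.symm

lemma eq_of_le {x y : A} (h : le x y) : op (neg (op (neg y) x)) x = y := by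
  have h6 := mv6 x y
  rw [show op (neg x) y = one from h, neg_one, zero_op] at h6
  exact h6.symm

lemma add_le_add_right {a b : A} (h : le a b) (c : A) : le (op a c) (op b c) := by
  unfold le
  have hb := eq_of_le h
  calc op (neg (op a c)) (op b c)
      = op (neg (op a c)) (op (op (neg (op (neg b) a)) a) c) := by rw [hb]
    _ = op (neg (op (neg b) a)) (op (neg (op a c)) (op a c)) := by
        rw [op_assoc (neg (op (neg b) a)) a c, op_comm (neg (op a c)),
          op_assoc, op_comm (op a c)]
    _ = one := by rw [neg_op_self, op_one]

lemma le_trans' {x y z : A} (h1 : le x y) (h2 : le y z) : le x z := by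
  unfold le
  have hz := eq_of_le h2
  calc op (neg x) z = op (neg x) (op (neg (op (neg z) y)) y) := by rw [hz]
    _ = op (neg (op (neg z) y)) (op (neg x) y) := by
        rw [op_comm (neg x), op_assoc, op_comm y]
    _ = one := by rw [show op (neg x) y = one from h1, op_one]

lemma eq_one_of_one_le {a : A} (h : le one a) : a = one := by
  unfold le at h
  rwa [neg_one, zero_op] at h

lemma two_rearrange (x y : A) :
    op (op x y) (op x y) = op (op x x) (op y y) := by
  rw [op_assoc, ← op_assoc y x y, op_comm y x, op_assoc x y y, ← op_assoc]

lemma sq_eq_zero {x : A} (h : le x (neg x)) : MV.sq x = zero := by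
  unfold le at h
  unfold MV.sq odot
  rw [h, neg_one]

lemma le_neg_self_of_sq {x : A} (h : MV.sq x = zero) : le x (neg x) := by
  unfold MV.sq odot at h
  unfold le
  have := congrArg neg h
  rwa [MV.neg_neg] at this

end MVAux

open MV MVAux in
/-- In a perfect MV-algebra, the radical `{x : x ≤ ¬x}` is closed under binary suprema. -/
theorem perfect_radical_sup_closed {A : Type*} [MV A] (hA : Perfect A) :
    ∀ x y : A, le x (neg x) → le y (neg y) → le (ssup x y) (neg (ssup x y)) := by
  obtain ⟨hnt, hsq, hcmp⟩ := hA
  intro x y hx hy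
  -- `sup(x,y) ≤ x ⊕ y`
  have h1 : le (odot x (neg y)) x := by
    unfold le odot
    rw [MV.neg_neg, MV.neg_neg, op_assoc, op_comm y x, ← op_assoc, neg_op_self, one_op]
  have hsw : le (ssup x y) (op x y) := add_le_add_right h1 y
  rcases hcmp (op x y) with hw | hw
  · -- Case `x ⊕ y ≤ ¬(x ⊕ y)`
    have hns : le (neg (op x y)) (neg (ssup x y)) := by
      unfold le
      rw [MV.neg_neg, op_comm]
      exact hsw
    have h2 : le (op (neg (op x y)) (neg (op x y)))
        (op (neg (ssup x y)) (neg (op x y))) := add_le_add_right hns (neg (op x y))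
    have h3 : le (op (neg (ssup x y)) (neg (op x y)))
        (op (neg (ssup x y)) (neg (ssup x y))) := by
      unfold le
      rw [op_comm (neg (ssup x y)) (neg (op x y))]
      exact add_le_add_right hns (neg (ssup x y))
    have h23 := le_trans' h2 h3
    unfold le at h23 hw ⊢
    rw [hw, neg_one, zero_op] at h23
    exact h23
  · -- Case `¬(x ⊕ y) ≤ x ⊕ y`: contradiction with perfectness
    exfalso
    have hww : op (op x y) (op x y) = one := by
      unfold le at hw; rwa [MV.neg_neg] at hw
    have hx0 : MV.sq x = zero := sq_eq_zero hx
    have hy0 : MV.sq y = zero := sq_eq_zero hy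
    have hu0 : MV.sq (op x x) = zero := by
      rw [← hsq x, hx0]; exact op_zero zero
    have hv0 : MV.sq (op y y) = zero := by
      rw [← hsq y, hy0]; exact op_zero zero
    have hv : le (op y y) (neg (op y y)) := le_neg_self_of_sq hv0
    have huv : op (op x x) (op y y) = one := by
      rw [← two_rearrange]; exact hww
    have hl1 : le (neg (op x x)) (op y y) := by
      unfold le; rwa [MV.neg_neg]
    have hl2 : le (neg (op y y)) (op x x) := by
      unfold le; rw [MV.neg_neg, op_comm]; exact huv
    have h3 : le (neg (op x x)) (op x x) := le_trans' (le_trans' hl1 hv) hl2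
    have huu : op (op x x) (op x x) = one := by
      unfold le at h3; rwa [MV.neg_neg] at h3
    have hz1 : (zero : A) = one := by
      have h4 := hsq (op x x)
      rw [hu0, op_zero, huu] at h4
      rw [h4]
      show MV.sq one = one
      unfold MV.sq odot
      rw [neg_one, op_zero]
      rfl
    exact hnt hz1
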